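/- Let M be a symmetric positive definite n×n real matrix, let α > 0, and let Θ_w and Θ_v be n×n diagonal matrices with strictly positive diagonal entries. Then [−M M] · ([[α M + Θ_w, −α M], [−α M, α M + Θ_v]])⁻¹ · [−M; M] = (1/α) M − (1/α²) (Θ_w⁻¹ + Θ_v⁻¹ + (1/α) M⁻¹)⁻¹, where [−M M] is the n×2n block row matrix with blocks −M and M and [−M; M] is its transpose. -/

import Mathlib

open Matrix

private lemma posdef_smul {n : ℕ} {A : Matrix (Fin n) (Fin n) ℝ} (hA : A.PosDef)
    {c : ℝ} (hc : 0 < c) : (c • A).PosDef := by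
  refine ⟨?_, fun x hx => ?_⟩
  · unfold Matrix.IsHermitian
    rw [conjTranspose_smul, hA.isHermitian.eq]
    simp
  · exact (hA.smul hc).2 hx

/-- The Schur-complement contribution of the control block:
`[-M  M] [[αM + Θ_w, -αM], [-αM, αM + Θ_v]]⁻¹ [-M; M]
  = (1/α) M - (1/α²) (Θ_w⁻¹ + Θ_v⁻¹ + (1/α) M⁻¹)⁻¹`. -/
theorem control_schur_identity {n : ℕ}
    (M : Matrix (Fin n) (Fin n) ℝ) (hM : M.PosDef)
    (α : ℝ) (hα : 0 < α)
    (dw dv : Fin n → ℝ) (hdw : ∀ i, 0 < dw i) (hdv : ∀ i, 0 < dv i) :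
    Matrix.fromCols (-M) M *
        (Matrix.fromBlocks (α • M + Matrix.diagonal dw) (-(α • M)) (-(α • M))
          (α • M + Matrix.diagonal dv))⁻¹ *
        Matrix.fromRows (-M) M =
      α⁻¹ • M - (α ^ 2)⁻¹ •
        ((Matrix.diagonal dw)⁻¹ + (Matrix.diagonal dv)⁻¹ + α⁻¹ • M⁻¹)⁻¹ := by
  set Θw := Matrix.diagonal dw with hΘw
  set Θv := Matrix.diagonal dv with hΘv
  have hΘwPD : Θw.PosDef := Matrix.PosDef.diagonal hdw
  have hΘvPD : Θv.PosDef := Matrix.PosDef.diagonal hdv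
  set T := Θw⁻¹ + Θv⁻¹ + α⁻¹ • M⁻¹ with hT
  have hTPD : T.PosDef :=
    (hΘwPD.inv.add hΘvPD.inv).add_posSemidef (posdef_smul hM.inv (inv_pos.mpr hα)).posSemidef
  set S := T⁻¹ with hS
  -- basic inverse facts
  have hMM : M * M⁻¹ = 1 :=
    Matrix.mul_nonsing_inv M (Matrix.isUnit_iff_isUnit_det M |>.mp hM.isUnit)
  have hΘwi : Θw * Θw⁻¹ = 1 :=
    Matrix.mul_nonsing_inv Θw (Matrix.isUnit_iff_isUnit_det Θw |>.mp hΘwPD.isUnit)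
  have hΘvi : Θv * Θv⁻¹ = 1 :=
    Matrix.mul_nonsing_inv Θv (Matrix.isUnit_iff_isUnit_det Θv |>.mp hΘvPD.isUnit)
  have hTS : T * S = 1 :=
    Matrix.mul_nonsing_inv T (Matrix.isUnit_iff_isUnit_det T |>.mp hTPD.isUnit)
  -- the block matrix is positive definite
  set B := Matrix.fromBlocks (α • M + Θw) (-(α • M)) (-(α • M)) (α • M + Θv) with hB
  have hBPD : B.PosDef := by
    have hK : (Matrix.fromBlocks (α • M) (-(α • M)) (-(α • M)) (α • M)).PosSemidef := by
      have := (posdef_smul hM hα).posSemidef.mul_mul_conjTranspose_same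
        (Matrix.fromRows (1 : Matrix (Fin n) (Fin n) ℝ) (-1 : Matrix (Fin n) (Fin n) ℝ))
      rw [Matrix.fromRows_mul, Matrix.conjTranspose_fromRows_eq_fromCols_conjTranspose,
        Matrix.fromRows_mul_fromCols] at this
      simpa using this
    have hD : (Matrix.fromBlocks Θw 0 0 Θv).PosDef := by
      rw [hΘw, hΘv, Matrix.fromBlocks_diagonal]
      exact Matrix.PosDef.diagonal (fun i => by cases i <;> simp [hdw _, hdv _])
    have : B = Matrix.fromBlocks (α • M) (-(α • M)) (-(α • M)) (α • M)
        + Matrix.fromBlocks Θw 0 0 Θv := by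
      rw [hB, Matrix.fromBlocks_add]; simp
    rw [this]
    exact Matrix.PosDef.posSemidef_add hK hD
  -- solve the linear system
  set X := -(α⁻¹ • (Θw⁻¹ * S)) with hX
  set Y := α⁻¹ • (Θv⁻¹ * S) with hY
  have hMTS : M * Θw⁻¹ * S + M * Θv⁻¹ * S + α⁻¹ • S = M := by
    have h1 : M * (T * S) = M := by rw [hTS, mul_one]
    conv_rhs => rw [← h1]
    simp only [hT, mul_add, add_mul, Matrix.mul_smul, Matrix.smul_mul, ← Matrix.mul_assoc,
      hMM, one_mul]
  have e1 : (α • M + Θw) * X + (-(α • M)) * Y = -M := by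
    have e : (α • M + Θw) * X + (-(α • M)) * Y
        = -(M * Θw⁻¹ * S + M * Θv⁻¹ * S + α⁻¹ • S) := by
      simp only [hX, hY, mul_add, add_mul, Matrix.mul_smul, Matrix.smul_mul, mul_neg,
        neg_mul, smul_neg, smul_smul, ← Matrix.mul_assoc, hΘwi, hΘvi, one_mul,
        mul_inv_cancel₀ hα.ne', inv_mul_cancel₀ hα.ne', one_smul]
      abel
    rw [e, hMTS]
  have e2 : (-(α • M)) * X + (α • M + Θv) * Y = M := by
    have e : (-(α • M)) * X + (α • M + Θv) * Y
        = M * Θw⁻¹ * S + M * Θv⁻¹ * S + α⁻¹ • S := by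
      simp only [hX, hY, mul_add, add_mul, Matrix.mul_smul, Matrix.smul_mul, mul_neg,
        neg_mul, smul_neg, smul_smul, ← Matrix.mul_assoc, hΘwi, hΘvi, one_mul,
        mul_inv_cancel₀ hα.ne', inv_mul_cancel₀ hα.ne', one_smul]
      abel
    rw [e, hMTS]
  have hsolve : B * Matrix.fromRows X Y = Matrix.fromRows (-M) M := by
    rw [hB, Matrix.fromBlocks_mul_fromRows, e1, e2]
  -- conclude
  have hBinv : B⁻¹ * Matrix.fromRows (-M) M = Matrix.fromRows X Y := by
    rw [← hsolve, ← Matrix.mul_assoc,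
      Matrix.nonsing_inv_mul B (Matrix.isUnit_iff_isUnit_det B |>.mp hBPD.isUnit)]
    exact Matrix.one_mul _
  rw [Matrix.mul_assoc, hBinv, Matrix.fromCols_mul_fromRows]
  have hfin : M * Θw⁻¹ * S + M * Θv⁻¹ * S = M - α⁻¹ • S := by
    conv_rhs => rw [← hMTS]
    abel
  rw [hX, hY]
  simp only [Matrix.mul_smul, mul_neg, neg_mul, neg_neg, ← Matrix.mul_assoc]
  rw [← smul_add, hfin, smul_sub, smul_smul, sq, mul_inv]
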